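/- Let g ∈ Mon(X) and u ∈ F(G,g,I). Then the lower set ↓(u) = {v ∈ F(G,g,I) : v ⊆ u} is order-isomorphic, via the map v ↦ (v(r))_{r ∈ [0,1]}, to the product poset ∏_{r ∈ [0,1]} [1, u(r)] with componentwise order (all but finitely many factors of this product are the one-element poset). In particular, if the nontrivial values of u are x_L = u(0), x_1, …, x_k (at points of (0,1)) and x_R = u(1), then ↓(u) is order-isomorphic to the product of intervals [1,x_L] × [1,x_1] × ⋯ × [1,x_k] × [1,x_R]. -/

import Mathlib

noncomputable def wlen {G : Type*} [Group G] (X : Set G) (g : G) : ℕ :=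
  sInf {n | ∃ l : List G, l.length = n ∧ (∀ x ∈ l, x ∈ X) ∧ l.prod = g}

def intLe {G : Type*} [Group G] (X : Set G) (h g : G) : Prop :=
  h ∈ Submonoid.closure X ∧ h⁻¹ * g ∈ Submonoid.closure X ∧
    wlen X h + wlen X (h⁻¹ * g) = wlen X g

structure GMultiset (G : Type*) [Group G] where
  f : Set.Icc (0 : ℝ) 1 → G
  fin : Set.Finite {r | f r ≠ 1}

noncomputable def rho {G : Type*} [Group G] (u : GMultiset G) : G :=
  ((u.fin.toFinset.sort (· ≤ ·)).map u.f).prod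

noncomputable def memF {G : Type*} [Group G] (X : Set G) (g : G) (u : GMultiset G) : Prop :=
  (∑ r ∈ u.fin.toFinset, wlen X (u.f r)) = wlen X (rho u) ∧ intLe X (rho u) g

def msub {G : Type*} [Group G] (X : Set G) (u v : GMultiset G) : Prop :=
  ∀ r, intLe X (u.f r) (v.f r)


section Basic
variable {G : Type*} [Group G] {X : Set G}

lemma wlen_le_length (l : List G) (hl : ∀ x ∈ l, x ∈ X) : wlen X l.prod ≤ l.length :=
  Nat.sInf_le ⟨l, rfl, hl, rfl⟩

lemma wlen_one : wlen X (1 : G) = 0 :=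
  Nat.le_zero.mp (by simpa using wlen_le_length (X := X) [] (by simp))

lemma exists_word {g : G} (h : g ∈ Submonoid.closure X) :
    ∃ l : List G, (∀ x ∈ l, x ∈ X) ∧ l.prod = g ∧ l.length = wlen X g := by
  obtain ⟨l, hl, hp⟩ := Submonoid.exists_list_of_mem_closure h
  have hne : {n | ∃ l : List G, l.length = n ∧ (∀ x ∈ l, x ∈ X) ∧ l.prod = g}.Nonempty :=
    ⟨l.length, l, rfl, hl, hp⟩
  obtain ⟨l', h1, h2, h3⟩ := Nat.sInf_mem hne
  exact ⟨l', h2, h3, h1⟩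

lemma wlen_eq_zero {g : G} (h : g ∈ Submonoid.closure X) (h0 : wlen X g = 0) : g = 1 := by
  obtain ⟨l, _, hp, hlen⟩ := exists_word h
  rw [h0, List.length_eq_zero_iff] at hlen
  simp [hlen] at hp
  exact hp.symm

lemma wlen_mul_le {a b : G} (ha : a ∈ Submonoid.closure X) (hb : b ∈ Submonoid.closure X) :
    wlen X (a * b) ≤ wlen X a + wlen X b := by
  obtain ⟨l, hl, hp, hlen⟩ := exists_word ha
  obtain ⟨m, hm, hq, hmlen⟩ := exists_word hb
  have := wlen_le_length (l ++ m) (by intro x hx; rcases List.mem_append.mp hx with h | h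
                                      exacts [hl x h, hm x h])
  simpa [hp, hq, hlen, hmlen] using this

variable (hX : ∀ g x, x ∈ X → g * x * g⁻¹ ∈ X)
include hX

lemma conj_mem_closure {a : G} (q : G) (ha : a ∈ Submonoid.closure X) :
    q * a * q⁻¹ ∈ Submonoid.closure X ∧ wlen X (q * a * q⁻¹) ≤ wlen X a := by
  obtain ⟨l, hl, hp, hlen⟩ := exists_word ha
  have key : ∀ l : List G, (∀ x ∈ l, x ∈ X) →
      ((l.map fun x => q * x * q⁻¹).prod = q * l.prod * q⁻¹ ∧
        ∀ y ∈ l.map fun x => q * x * q⁻¹, y ∈ X) := by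
    intro l hl
    induction l with
    | nil => simp
    | cons a t ih =>
      obtain ⟨ih1, ih2⟩ := ih (fun x hx => hl x (List.mem_cons_of_mem _ hx))
      constructor
      · simp only [List.map_cons, List.prod_cons, ih1]; group
      · intro y hy
        rcases List.mem_cons.mp hy with h | h
        · exact h ▸ hX q a (hl a (List.mem_cons_self))
        · exact ih2 y h
  obtain ⟨hp', hm'⟩ := key l hl
  rw [hp] at hp'
  constructor
  · rw [← hp']; exact Submonoid.list_prod_mem _ (fun x hx => Submonoid.subset_closure (hm' x hx))
  · calc wlen X (q * a * q⁻¹) = wlen X (l.map fun x => q * x * q⁻¹).prod := by rw [hp']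
      _ ≤ _ := le_trans (wlen_le_length _ hm') (by simp [hlen])

lemma wlen_conj {a : G} (q : G) (ha : a ∈ Submonoid.closure X) :
    wlen X (q * a * q⁻¹) = wlen X a := by
  refine le_antisymm (conj_mem_closure hX q ha).2 ?_
  have h2 := conj_mem_closure hX q⁻¹ (conj_mem_closure hX q ha).1
  simpa [mul_assoc] using h2.2

end Basic
section Key
variable {G : Type*} [Group G] {X : Set G}

lemma intLe_closure_right {a b : G} (h : intLe X a b) : b ∈ Submonoid.closure X := by
  have := Submonoid.mul_mem _ h.1 h.2.1
  simpa using this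

lemma intLe_one_left {b : G} (hb : b ∈ Submonoid.closure X) : intLe X 1 b := by
  refine ⟨Submonoid.one_mem _, by simpa using hb, by simp [wlen_one]⟩

lemma intLe_one_right {a : G} (h : intLe X a 1) : a = 1 := by
  obtain ⟨h1, h2, h3⟩ := h
  rw [wlen_one] at h3
  exact wlen_eq_zero h1 (by omega)

lemma intLe_trans {a b c : G} (hab : intLe X a b) (hbc : intLe X b c) : intLe X a c := by
  obtain ⟨ha, hab1, hab2⟩ := hab
  obtain ⟨hb, hbc1, hbc2⟩ := hbc
  have hmem : a⁻¹ * c ∈ Submonoid.closure X := by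
    have := Submonoid.mul_mem _ hab1 hbc1
    simpa [mul_assoc] using this
  refine ⟨ha, hmem, ?_⟩
  have h1 : wlen X (a⁻¹ * c) ≤ wlen X (a⁻¹ * b) + wlen X (b⁻¹ * c) := by
    have := wlen_mul_le hab1 hbc1
    simpa [mul_assoc] using this
  have h2 : wlen X c ≤ wlen X a + wlen X (a⁻¹ * c) := by
    have := wlen_mul_le ha hmem
    simpa using this
  omega

lemma wlen_prod_le (l : List G) (h : ∀ x ∈ l, x ∈ Submonoid.closure X) :
    wlen X l.prod ≤ (l.map (wlen X)).sum := by
  induction l with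
  | nil => simp [wlen_one]
  | cons a t ih =>
    have ha := h a (List.mem_cons_self)
    have ht : ∀ x ∈ t, x ∈ Submonoid.closure X := fun x hx => h x (List.mem_cons_of_mem _ hx)
    simp only [List.prod_cons, List.map_cons, List.sum_cons]
    exact le_trans (wlen_mul_le ha (Submonoid.list_prod_mem _ ht)) (Nat.add_le_add_left (ih ht) _)

lemma forall₂_mem_right {bs as : List G} (h : List.Forall₂ (intLe X) bs as) :
    ∀ a ∈ as, a ∈ Submonoid.closure X := by
  induction h with
  | nil => simp
  | cons hba _ ih =>
    intro a ha
    rcases List.mem_cons.mp ha with h | h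
    · exact h ▸ intLe_closure_right hba
    · exact ih a h

lemma step_lemma (hX : ∀ g x, x ∈ X → g * x * g⁻¹ ∈ X) {b a Q P : G}
    (hba : intLe X b a) (hQP : intLe X Q P)
    (heq : wlen X a + wlen X P = wlen X (a * P)) :
    wlen X b + wlen X Q = wlen X (b * Q) ∧ intLe X (b * Q) (a * P) := by
  obtain ⟨hb, hc, hbc⟩ := hba
  obtain ⟨hQ, hd, hQd⟩ := hQP
  have hE := conj_mem_closure hX Q⁻¹ hc
  have hEw : wlen X (Q⁻¹ * (b⁻¹ * a) * Q⁻¹⁻¹) = wlen X (b⁻¹ * a) := wlen_conj hX Q⁻¹ hc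
  have hEd : (Q⁻¹ * (b⁻¹ * a) * Q⁻¹⁻¹) * (Q⁻¹ * P) ∈ Submonoid.closure X :=
    Submonoid.mul_mem _ hE.1 hd
  have hbQ : b * Q ∈ Submonoid.closure X := Submonoid.mul_mem _ hb hQ
  have hfact : (b * Q) * ((Q⁻¹ * (b⁻¹ * a) * Q⁻¹⁻¹) * (Q⁻¹ * P)) = a * P := by group
  have hEdle : wlen X ((Q⁻¹ * (b⁻¹ * a) * Q⁻¹⁻¹) * (Q⁻¹ * P))
      ≤ wlen X (b⁻¹ * a) + wlen X (Q⁻¹ * P) := by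
    calc wlen X ((Q⁻¹ * (b⁻¹ * a) * Q⁻¹⁻¹) * (Q⁻¹ * P))
        ≤ wlen X (Q⁻¹ * (b⁻¹ * a) * Q⁻¹⁻¹) + wlen X (Q⁻¹ * P) := wlen_mul_le hE.1 hd
      _ = _ := by rw [hEw]
  have hbQle : wlen X (b * Q) ≤ wlen X b + wlen X Q := wlen_mul_le hb hQ
  have htot : wlen X (a * P) ≤ wlen X (b * Q)
      + wlen X ((Q⁻¹ * (b⁻¹ * a) * Q⁻¹⁻¹) * (Q⁻¹ * P)) := by
    rw [← hfact]; exact wlen_mul_le hbQ hEd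
  have hinv : (b * Q)⁻¹ * (a * P) = (Q⁻¹ * (b⁻¹ * a) * Q⁻¹⁻¹) * (Q⁻¹ * P) := by group
  refine ⟨by omega, hbQ, hinv ▸ hEd, by rw [hinv]; omega⟩

lemma key_lemma (hX : ∀ g x, x ∈ X → g * x * g⁻¹ ∈ X) (bs as : List G)
    (h2 : List.Forall₂ (intLe X) bs as)
    (hsum : (as.map (wlen X)).sum = wlen X as.prod) :
    (bs.map (wlen X)).sum = wlen X bs.prod ∧ intLe X bs.prod as.prod := by
  induction h2 with
  | nil => exact ⟨by simp [wlen_one], intLe_one_left (Submonoid.one_mem _)⟩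
  | @cons b a bs' as' hba h2' ih =>
    have hasmem := forall₂_mem_right h2'
    have ha : a ∈ Submonoid.closure X := intLe_closure_right hba
    have hP : as'.prod ∈ Submonoid.closure X := Submonoid.list_prod_mem _ hasmem
    have hPle : wlen X as'.prod ≤ (as'.map (wlen X)).sum := wlen_prod_le _ hasmem
    have haP : wlen X (a * as'.prod) ≤ wlen X a + wlen X as'.prod := wlen_mul_le ha hP
    simp only [List.prod_cons, List.map_cons, List.sum_cons] at hsum ⊢
    have hPsum : (as'.map (wlen X)).sum = wlen X as'.prod := by omega
    obtain ⟨hQsum, hQP⟩ := ih hPsum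
    have heq : wlen X a + wlen X as'.prod = wlen X (a * as'.prod) := by omega
    obtain ⟨h1, h2⟩ := step_lemma hX hba hQP heq
    exact ⟨by omega, h2⟩

end Key
section Sorting
variable {α : Type*} [LinearOrder α] {G : Type*} [Group G]

omit [LinearOrder α] in
lemma prod_map_filter (f : α → G) (p : α → Bool) (hp : ∀ x, p x = false → f x = 1)
    (l : List α) : ((l.filter p).map f).prod = (l.map f).prod := by
  induction l with
  | nil => simp
  | cons a t ih =>
    by_cases h : p a
    · simp [List.filter_cons, h, ih]
    · simp only [Bool.not_eq_true] at h
      simp [List.filter_cons, h, ih, hp a h]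

lemma sort_filter (S : Finset α) (p : α → Bool) :
    (S.sort (· ≤ ·)).filter p = (S.filter (fun a => p a = true)).sort (· ≤ ·) := by
  apply List.Perm.eq_of_pairwise' ((S.pairwise_sort (· ≤ ·)).filter p)
    (Finset.pairwise_sort _ _)
  rw [← Multiset.coe_eq_coe, Finset.sort_eq, Finset.filter_val, ← Finset.sort_eq S (· ≤ ·),
    Multiset.filter_coe]
  simp

lemma prod_sort_eq (f : α → G) (S T : Finset α)
    (hS : ∀ x, f x ≠ 1 → x ∈ S) (hT : ∀ x, f x ≠ 1 → x ∈ T) :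
    ((S.sort (· ≤ ·)).map f).prod = ((T.sort (· ≤ ·)).map f).prod := by
  classical
  have hp : ∀ x, (decide (f x ≠ 1)) = false → f x = 1 := by
    intro x hx; simpa using hx
  rw [← prod_map_filter f _ hp (S.sort (· ≤ ·)), ← prod_map_filter f _ hp (T.sort (· ≤ ·)),
    sort_filter, sort_filter]
  have : S.filter (fun a => (decide (f a ≠ 1)) = true) = T.filter (fun a => (decide (f a ≠ 1)) = true) := by
    ext x
    simp only [Finset.mem_filter, decide_eq_true_eq]
    exact ⟨fun ⟨_, h⟩ => ⟨hT x h, h⟩, fun ⟨_, h⟩ => ⟨hS x h, h⟩⟩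
  rw [this]

lemma sum_sort (S : Finset α) (f : α → ℕ) :
    ((S.sort (· ≤ ·)).map f).sum = ∑ x ∈ S, f x := by
  rw [Finset.sum_eq_multiset_sum, ← Finset.sort_eq S (· ≤ ·), Multiset.map_coe,
    Multiset.sum_coe]

end Sorting

lemma GMultiset.ext' {G : Type*} [Group G] {v w : GMultiset G} (h : v.f = w.f) : v = w := by
  cases v; cases w; cases h; rfl

/-- for `u ∈ F(G,g,I)`, the map `v ↦ (v(r))_{r ∈ [0,1]}` is an order
isomorphism from the lower set `↓(u) = {v ∈ F(G,g,I) : v ⊆ u}` onto the product poset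
`∏_{r ∈ [0,1]} [1, u(r)]` with the componentwise order (here realized as the poset of
families `ϕ : [0,1] → G` with `ϕ(r) ≤ u(r)` for all `r`, ordered componentwise). -/
theorem stmt8 {G : Type*} [Group G] (X : Set G)
    (hX : ∀ g x, x ∈ X → g * x * g⁻¹ ∈ X)
    (g : G) (hg : g ∈ Submonoid.closure X)
    (u : GMultiset G) (hu : memF X g u) :
    Function.Bijective
      (fun v : {v : GMultiset G // memF X g v ∧ msub X v u} =>
        (⟨v.val.f, v.prop.2⟩ : {ϕ : Set.Icc (0 : ℝ) 1 → G // ∀ r, intLe X (ϕ r) (u.f r)})) ∧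
    ∀ v w : {v : GMultiset G // memF X g v ∧ msub X v u},
      msub X v.val w.val ↔ ∀ r, intLe X (v.val.f r) (w.val.f r) := by

  refine ⟨⟨?_, ?_⟩, fun v w => Iff.rfl⟩
  · intro v w h
    exact Subtype.ext (GMultiset.ext' (congrArg Subtype.val h))
  · rintro ⟨ϕ, hϕ⟩
    have hzero : ∀ r, u.f r = 1 → ϕ r = 1 := fun r hr => intLe_one_right (hr ▸ hϕ r)
    have hsub : {r | ϕ r ≠ 1} ⊆ {r | u.f r ≠ 1} := fun r hr => fun h1 => hr (hzero r h1)
    have hfin : Set.Finite {r | ϕ r ≠ 1} := u.fin.subset hsub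
    set L := u.fin.toFinset.sort (· ≤ ·) with hL
    have hvS : ∀ x, ϕ x ≠ 1 → x ∈ hfin.toFinset := by intro x hx; simpa using hx
    have huS : ∀ x, ϕ x ≠ 1 → x ∈ u.fin.toFinset := by
      intro x hx; simpa using hsub hx
    have hrho : rho ⟨ϕ, hfin⟩ = ((L.map ϕ)).prod := prod_sort_eq ϕ _ _ hvS huS
    have hforall : List.Forall₂ (intLe X) (L.map ϕ) (L.map u.f) := by
      rw [List.forall₂_map_left_iff, List.forall₂_map_right_iff]
      exact List.forall₂_same.mpr (fun x _ => hϕ x)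
    have hsumu : ((L.map u.f).map (wlen X)).sum = wlen X (L.map u.f).prod := by
      rw [List.map_map, sum_sort]
      exact hu.1
    obtain ⟨hsumv, hle⟩ := key_lemma hX _ _ hforall hsumu
    have hmem1 : (∑ r ∈ hfin.toFinset, wlen X (ϕ r)) = wlen X (rho ⟨ϕ, hfin⟩) := by
      rw [hrho, ← hsumv, List.map_map, sum_sort]
      apply Finset.sum_subset
      · intro x hx
        exact huS x (by simpa using hx)
      · intro x _ hx
        have : ϕ x = 1 := by
          by_contra hc
          exact hx (hvS x hc)
        rw [this, wlen_one]
    have hmem2 : intLe X (rho ⟨ϕ, hfin⟩) g := by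
      rw [hrho]
      exact intLe_trans hle hu.2
    exact ⟨⟨⟨ϕ, hfin⟩, ⟨hmem1, hmem2⟩, hϕ⟩, rfl⟩
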